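/- For a Galton–Watson process with offspring law μ started from k ancestors, the probability that the total progeny equals n (for 1 ≤ k ≤ n) equals (k/n) P(X_1 + ... + X_n = n − k), where X_1, ..., X_n are i.i.d. with law μ. -/

import Mathlib

open scoped ENNReal

/-- Finite planar rooted trees. -/
inductive PTree : Type
  | node : List PTree → PTree

namespace PTree

/-- Number of vertices of a planar rooted tree. -/
def size : PTree → ℕ
  | node l => 1 + (l.attach.map (fun t => size t.1)).sum
decreasing_by
  have := List.sizeOf_lt_of_mem t.2
  simp only [node.sizeOf_spec] at *
  omega

/-- Galton–Watson weight of a tree for the offspring law `p`: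
the product over all vertices of `p (number of children)`; this is the probability that the
genealogical tree of a single ancestor in a Galton–Watson process with reproduction law `p`
equals the given planar tree. -/
noncomputable def wt (p : PMF ℕ) : PTree → ℝ≥0∞
  | node l => p l.length * (l.attach.map (fun t => wt p t.1)).prod
decreasing_by
  have := List.sizeOf_lt_of_mem t.2
  simp only [node.sizeOf_spec] at *
  omega

/-- Depth-first list of the out-degrees (numbers of children) of the vertices of a tree. -/
def degList : PTree → List ℕ
  | node l => l.length :: (l.attach.map (fun t => degList t.1)).flatten
decreasing_by
  have := List.sizeOf_lt_of_mem t.2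
  simp only [node.sizeOf_spec] at *
  omega

end PTree

/-- Planar forests with `k` rooted trees and `n` vertices in total. -/
def PForest (k n : ℕ) : Type := {f : Fin k → PTree // ∑ i, (f i).size = n}

/-- Galton–Watson weight of a forest of `k` trees: the probability that a Galton–Watson
process with offspring law `p` started from `k` ancestors has this genealogical forest. -/
noncomputable def forestWt (p : PMF ℕ) {k n : ℕ} (f : PForest k n) : ℝ≥0∞ :=
  ∏ i, (f.1 i).wt p

/-- Depth-first list of out-degrees of a forest (trees listed from left to right). -/
def forestDegList {k n : ℕ} (f : PForest k n) : List ℕ :=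
  (List.ofFn fun i => (f.1 i).degList).flatten

namespace GWAux

theorem ptree_ind {motive : PTree → Prop}
    (h : ∀ l : List PTree, (∀ t ∈ l, motive t) → motive (PTree.node l)) : ∀ t, motive t
  | PTree.node l => h l (fun t ht => ptree_ind h t)
decreasing_by
  have := List.sizeOf_lt_of_mem ht
  simp only [PTree.node.sizeOf_spec] at *
  omega

lemma size_node (l : List PTree) : (PTree.node l).size = 1 + (l.map PTree.size).sum := by
  rw [PTree.size]
  congr 1
  simp

lemma wt_node (p : PMF ℕ) (l : List PTree) :
    (PTree.node l).wt p = p l.length * (l.map (PTree.wt p)).prod := by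
  rw [PTree.wt]
  congr 2
  simp

lemma degList_node (l : List PTree) :
    (PTree.node l).degList = l.length :: (l.map PTree.degList).flatten := by
  rw [PTree.degList]
  congr 2
  simp

lemma wt_eq_prod (p : PMF ℕ) : ∀ t : PTree, t.wt p = (t.degList.map (fun d => p d)).prod := by
  refine ptree_ind (fun l ih => ?_)
  rw [wt_node, degList_node]
  rw [List.map_cons, List.prod_cons, List.map_flatten, List.map_map, List.prod_flatten,
    List.map_map]
  have h2 : List.map (PTree.wt p) l
      = List.map (List.prod ∘ (List.map fun d => p d) ∘ PTree.degList) l :=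
    List.map_congr_left fun t ht => by simp [ih t ht]
  rw [h2]

lemma degList_length : ∀ t : PTree, t.degList.length = t.size := by
  refine ptree_ind (fun l ih => ?_)
  rw [degList_node, size_node, List.length_cons, List.length_flatten, List.map_map]
  rw [Nat.add_comm]
  congr 2
  exact List.map_congr_left fun t ht => ih t ht

lemma sum_aux (L : List PTree) (h : ∀ t ∈ L, t.degList.sum + 1 = t.size) :
    (L.map (List.sum ∘ PTree.degList)).sum + L.length = (L.map PTree.size).sum := by
  induction L with
  | nil => simp
  | cons a L ih =>
    simp only [List.map_cons, List.sum_cons, List.length_cons, Function.comp_apply]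
    have h1 := h a (by simp)
    have h2 := ih (fun t ht => h t (by simp [ht]))
    omega

lemma degList_sum : ∀ t : PTree, t.degList.sum + 1 = t.size := by
  refine ptree_ind (fun l ih => ?_)
  rw [degList_node, size_node, List.sum_cons, List.sum_flatten, List.map_map]
  have := sum_aux l ih
  omega

def Valid (k : ℕ) (d : List ℕ) : Prop := ∀ j < d.length, j < k + (d.take j).sum

def IsCode (k : ℕ) (d : List ℕ) : Prop := Valid k d ∧ d.sum + k = d.length

instance (k : ℕ) (d : List ℕ) : Decidable (Valid k d) := by
  unfold Valid; exact Nat.decidableBallLT _ _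

lemma isCode_append {k k' : ℕ} {d1 d2 : List ℕ} (h1 : IsCode k d1) (h2 : IsCode k' d2) :
    IsCode (k + k') (d1 ++ d2) := by
  obtain ⟨v1, s1⟩ := h1
  obtain ⟨v2, s2⟩ := h2
  constructor
  · intro j hj
    rw [List.length_append] at hj
    rcases Nat.lt_or_ge j d1.length with hc | hc
    · have := v1 j hc
      rw [List.take_append_of_le_length hc.le]
      omega
    · rcases Nat.eq_or_lt_of_le hc with hc' | hc'
      · -- j = d1.length; then d2 ≠ [] so 0 < k'
        have hd2 : 0 < d2.length := by omega
        have := v2 0 hd2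
        simp only [List.take_zero, List.sum_nil] at this
        subst hc'
        rw [List.take_append_of_le_length le_rfl, List.take_length]
        omega
      · have hj' : j - d1.length < d2.length := by omega
        have := v2 (j - d1.length) hj'
        rw [List.take_append, List.take_of_length_le (by omega), List.sum_append]
        omega
  · rw [List.sum_append, List.length_append]; omega

lemma isCode_cons {c : ℕ} {d : List ℕ} (h : IsCode c d) : IsCode 1 (c :: d) := by
  obtain ⟨v, s⟩ := h
  constructor
  · intro j hj
    cases j with
    | zero => simp
    | succ j' =>
      simp only [List.length_cons] at hj
      have := v j' (by omega)
      rw [List.take_succ_cons, List.sum_cons]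
      omega
  · simp only [List.sum_cons, List.length_cons]; omega

lemma isCode_cons_rest {k c : ℕ} {d : List ℕ} (h : IsCode k (c :: d)) (hk : 1 ≤ k) :
    IsCode (k - 1 + c) d := by
  obtain ⟨v, s⟩ := h
  simp only [List.sum_cons, List.length_cons] at s
  constructor
  · intro j hj
    have := v (j + 1) (by simp; omega)
    rw [List.take_succ_cons, List.sum_cons] at this
    omega
  · omega

lemma isCode_flatten (L : List PTree) (h : ∀ t ∈ L, IsCode 1 t.degList) :
    IsCode L.length (L.map PTree.degList).flatten := by
  induction L with
  | nil => exact ⟨fun j hj => by simp at hj, by simp⟩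
  | cons a L ih =>
    have := isCode_append (h a (by simp)) (ih (fun t ht => h t (by simp [ht])))
    simpa [Nat.add_comm] using this

lemma isCode_degList : ∀ t : PTree, IsCode 1 t.degList := by
  refine ptree_ind (fun l ih => ?_)
  rw [degList_node]
  exact isCode_cons (isCode_flatten l ih)

lemma flatten_deg_inj (L1 : List PTree)
    (ih : ∀ t ∈ L1, ∀ t2 r1 r2, t.degList ++ r1 = t2.degList ++ r2 → t = t2 ∧ r1 = r2) :
    ∀ L2 (r1 r2 : List ℕ), L1.length = L2.length →
      (L1.map PTree.degList).flatten ++ r1 = (L2.map PTree.degList).flatten ++ r2 →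
      L1 = L2 ∧ r1 = r2 := by
  induction L1 with
  | nil =>
    intro L2 r1 r2 hlen h
    cases L2 with
    | nil => simpa using h
    | cons b L2 => simp at hlen
  | cons a L1 ihl =>
    intro L2 r1 r2 hlen h
    cases L2 with
    | nil => simp at hlen
    | cons b L2 =>
      simp only [List.map_cons, List.flatten_cons, List.append_assoc] at h
      obtain ⟨hab, h'⟩ := ih a (by simp) b _ _ h
      obtain ⟨hL, hr⟩ := ihl (fun t ht => ih t (by simp [ht])) L2 r1 r2 (by simpa using hlen) h'
      exact ⟨by rw [hab, hL], hr⟩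

lemma degList_append_inj : ∀ t1 t2 : PTree, ∀ r1 r2 : List ℕ,
    t1.degList ++ r1 = t2.degList ++ r2 → t1 = t2 ∧ r1 = r2 := by
  refine ptree_ind (fun l1 ih => ?_)
  rintro ⟨l2⟩ r1 r2 h
  rw [degList_node, degList_node] at h
  simp only [List.cons_append, List.cons.injEq] at h
  obtain ⟨hlen, h'⟩ := h
  obtain ⟨hL, hr⟩ := flatten_deg_inj l1 ih l2 r1 r2 hlen h'
  exact ⟨by rw [hL], hr⟩

lemma degList_flatten_inj (L1 L2 : List PTree) (hlen : L1.length = L2.length)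
    (h : (L1.map PTree.degList).flatten = (L2.map PTree.degList).flatten) : L1 = L2 :=
  (flatten_deg_inj L1 (fun t _ => degList_append_inj t) L2 [] []
    hlen (by simpa using h)).1

lemma exists_forest : ∀ n : ℕ, ∀ d : List ℕ, ∀ k : ℕ, d.length = n → IsCode k d →
    ∃ L : List PTree, L.length = k ∧ (L.map PTree.degList).flatten = d := by
  intro n
  induction n using Nat.strong_induction_on with
  | _ n ihn =>
  intro d k hlen hcode
  cases d with
  | nil =>
    have : k = 0 := by have := hcode.2; simpa using this
    exact ⟨[], by simp [this]⟩
  | cons c rest =>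
    have hn : n = rest.length + 1 := by simpa using hlen.symm
    have hk : 1 ≤ k := by
      by_contra hk
      have := hcode.1 0 (by simp)
      simp only [List.take_zero, List.sum_nil] at this
      omega
    obtain ⟨L, hL, hflat⟩ := ihn rest.length (by omega) rest (k - 1 + c) rfl
      (isCode_cons_rest hcode hk)
    refine ⟨PTree.node (L.take c) :: L.drop c, ?_, ?_⟩
    · simp only [List.length_cons, List.length_drop, hL]
      omega
    · have hc : c ≤ L.length := by omega
      simp only [List.map_cons, List.flatten_cons, degList_node]
      rw [List.length_take, Nat.min_eq_left hc]
      have : (List.map PTree.degList (L.take c)).flatten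
          ++ (List.map PTree.degList (L.drop c)).flatten = rest := by
        rw [← List.flatten_append, ← List.map_append, List.take_append_drop, hflat]
      simp only [List.cons_append, this]

lemma length_le_sum (l : List ℕ) (h : ∀ x ∈ l, 1 ≤ x) : l.length ≤ l.sum := by
  induction l with
  | nil => simp
  | cons a L ih =>
    simp only [List.length_cons, List.sum_cons]
    have := h a (by simp)
    have := ih (fun x hx => h x (by simp [hx]))
    omega

lemma rotate_append (P Q : List ℕ) : (P ++ Q).rotate P.length = Q ++ P := by
  rw [List.rotate_eq_drop_append_take (by simp), List.drop_left, List.take_left]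

lemma exists_pair_aux (u : List ℕ) (hcu : ∃ x ∈ u, x ≠ 0) :
    ∃ s e a, (u.reverse ++ [0]).rotate s = e ++ [a + 1, 0] := by
  classical
  set m := u.findIdx (fun x => decide (x ≠ 0)) with hm
  have hmlt : m < u.length := List.findIdx_lt_length_of_exists
    (by obtain ⟨x, hx, hx0⟩ := hcu; exact ⟨x, hx, by simpa using hx0⟩)
  have hb : u[m] ≠ 0 := of_decide_eq_true (@List.findIdx_getElem _ _ u hmlt)
  obtain ⟨a, ha⟩ : ∃ a, u[m] = a + 1 := ⟨u[m] - 1, by omega⟩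
  have hzero : ∀ i (h : i < m), u[i]'(by omega) = 0 := by
    intro i hi
    have h2 := List.not_of_lt_findIdx (xs := u) (p := fun x => decide (x ≠ 0)) hi
    have h3 : ¬(u[i]'(by omega) ≠ 0) := of_decide_eq_false h2
    omega
  have htake : u.take m = List.replicate m 0 := by
    rw [List.eq_replicate_iff]
    refine ⟨by rw [List.length_take]; omega, ?_⟩
    intro b hbmem
    obtain ⟨i, hi, hib⟩ := List.getElem_of_mem hbmem
    have hi' : i < m := by simp only [List.length_take] at hi; omega
    rw [List.getElem_take] at hib
    rw [← hib]
    exact hzero i hi'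
  have hudecomp : u = List.replicate m 0 ++ (a + 1) :: u.drop (m + 1) := by
    conv_lhs => rw [← List.take_append_drop m u]
    rw [htake, List.drop_eq_getElem_cons hmlt, ha]
  have hcdecomp : u.reverse = (u.drop (m + 1)).reverse ++ (a + 1) :: List.replicate m 0 := by
    conv_lhs => rw [hudecomp]
    simp [List.reverse_append]
  refine ⟨(u.drop (m + 1)).reverse.length + 2, List.replicate m 0 ++ (u.drop (m + 1)).reverse,
    a, ?_⟩
  have key : u.reverse ++ [0] = ((u.drop (m + 1)).reverse ++ [a + 1, 0]) ++ List.replicate m 0 := by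
    rw [hcdecomp]
    simp only [List.cons_append, List.append_assoc, List.cons.injEq, List.nil_append, true_and]
    rw [← List.replicate_succ, List.replicate_succ']
  rw [key]
  have hlen : (u.drop (m + 1)).reverse.length + 2
      = ((u.drop (m + 1)).reverse ++ [a + 1, 0]).length := by simp
  rw [hlen, rotate_append]
  simp [List.append_assoc]

lemma exists_pair (d : List ℕ) (h0 : 0 ∈ d) (h1 : ∃ x ∈ d, x ≠ 0) :
    ∃ s e a, d.rotate s = e ++ [a + 1, 0] := by
  obtain ⟨A, B, hd⟩ := List.append_of_mem h0
  have hd' : d = (A ++ [0]) ++ B := by simp [hd]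
  have hrot : d.rotate (A.length + 1) = (B ++ A) ++ [0] := by
    have : A.length + 1 = (A ++ [0]).length := by simp
    rw [hd', this, rotate_append]
    simp
  have hBA : ∃ x ∈ B ++ A, x ≠ 0 := by
    obtain ⟨x, hx, hx0⟩ := h1
    rw [hd] at hx
    simp only [List.mem_append, List.mem_cons] at hx
    rcases hx with hx | hx
    · exact ⟨x, by simp [hx], hx0⟩
    · rcases hx with hx | hx
      · omega
      · exact ⟨x, by simp [hx], hx0⟩
  obtain ⟨s, e, a, hs⟩ := exists_pair_aux (B ++ A).reverse (by
    obtain ⟨x, hx, hx0⟩ := hBA; exact ⟨x, by rw [List.mem_reverse]; exact hx, hx0⟩)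
  rw [List.reverse_reverse] at hs
  exact ⟨A.length + 1 + s, e, a, by rw [← List.rotate_rotate, hrot, hs]⟩

/-- number of valid rotations -/
def cnt (k : ℕ) (d : List ℕ) : ℕ :=
  ((Finset.range d.length).filter fun r => Valid k (d.rotate r)).card

lemma cnt_rotate_one (k : ℕ) (l : List ℕ) : cnt k (l.rotate 1) = cnt k l := by
  rcases Nat.eq_zero_or_pos l.length with h0 | hpos
  · rw [List.length_eq_zero_iff] at h0; subst h0; simp [cnt]
  set n := l.length with hn
  have hrot : ∀ r, (l.rotate 1).rotate r = l.rotate ((1 + r) % n) := fun r => by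
    rw [List.rotate_rotate, hn]; exact (List.rotate_mod _ _).symm
  have idx1 : ∀ r < n, ((1 + r) % n + (n - 1)) % n = r := by
    intro r hr
    rw [Nat.mod_add_mod]
    have h1 : 1 + r + (n - 1) = r + n := by omega
    rw [h1, Nat.add_mod_right, Nat.mod_eq_of_lt hr]
  have idx2 : ∀ r < n, (1 + (r + (n - 1)) % n) % n = r := by
    intro r hr
    rw [Nat.add_comm 1, Nat.mod_add_mod]
    have h1 : r + (n - 1) + 1 = r + n := by omega
    rw [h1, Nat.add_mod_right, Nat.mod_eq_of_lt hr]
  unfold cnt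
  rw [List.length_rotate, ← hn]
  refine Finset.card_bij' (fun r _ => (1 + r) % n) (fun r _ => (r + (n - 1)) % n) ?_ ?_ ?_ ?_
  · intro r hr
    simp only [Finset.mem_filter, Finset.mem_range] at hr ⊢
    refine ⟨Nat.mod_lt _ hpos, ?_⟩
    have h2 := hr.2
    rwa [hrot r] at h2
  · intro r hr
    simp only [Finset.mem_filter, Finset.mem_range] at hr ⊢
    refine ⟨Nat.mod_lt _ hpos, ?_⟩
    rw [hrot, idx2 r hr.1]
    exact hr.2
  · intro r hr
    simp only [Finset.mem_filter, Finset.mem_range] at hr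
    show ((1 + r) % n + (n - 1)) % n = r
    exact idx1 r hr.1
  · intro r hr
    simp only [Finset.mem_filter, Finset.mem_range] at hr
    show (1 + (r + (n - 1)) % n) % n = r
    exact idx2 r hr.1

lemma cnt_rotate (k : ℕ) (l : List ℕ) (s : ℕ) : cnt k (l.rotate s) = cnt k l := by
  induction s with
  | zero => simp
  | succ s ih =>
    have : l.rotate (s + 1) = (l.rotate s).rotate 1 := by rw [List.rotate_rotate]
    rw [this, cnt_rotate_one, ih]

lemma valid_merge (k a : ℕ) (u v : List ℕ) :
    Valid k (u ++ (a + 1) :: 0 :: v) ↔ Valid k (u ++ a :: v) := by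
  constructor
  · intro h j hj
    simp only [List.length_append, List.length_cons] at hj
    rcases Nat.lt_or_ge j (u.length + 1) with hc | hc
    · have hju : j ≤ u.length := by omega
      have := h j (by simp; omega)
      rwa [List.take_append_of_le_length hju] at this ⊢
    · set j' := j - u.length - 1 with hj'
      have := h (j + 1) (by simp; omega)
      rw [List.take_append, List.take_of_length_le (by omega),
        List.sum_append] at this ⊢
      have e1 : j + 1 - u.length = j' + 2 := by omega
      have e2 : j - u.length = j' + 1 := by omega
      rw [e1] at this
      rw [e2]
      simp only [List.take_succ_cons, List.sum_cons] at this ⊢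
      have hlen : (List.take j' v).sum = (List.take j' v).sum := rfl
      omega
  · intro h j hj
    simp only [List.length_append, List.length_cons] at hj
    rcases Nat.lt_or_ge j (u.length + 1) with hc | hc
    · have hju : j ≤ u.length := by omega
      have := h j (by simp; omega)
      rwa [List.take_append_of_le_length hju] at this ⊢
    · rcases Nat.eq_or_lt_of_le hc with he | hlt
      · -- j = u.length + 1
        subst he
        have h0 := h u.length (by simp)
        rw [List.take_append_of_le_length le_rfl, List.take_length] at h0
        rw [List.take_append, List.take_of_length_le (by omega)]
        have e1 : u.length + 1 - u.length = 1 := by omega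
        rw [e1]
        have e2 : List.take 1 ((a + 1) :: 0 :: v) = [a + 1] := rfl
        rw [e2, List.sum_append, List.sum_cons, List.sum_nil]
        omega
      · set j' := j - u.length - 2 with hj'
        have := h (j - 1) (by simp; omega)
        rw [List.take_append, List.take_of_length_le (by omega),
          List.sum_append] at this ⊢
        have e1 : j - 1 - u.length = j' + 1 := by omega
        have e2 : j - u.length = j' + 2 := by omega
        rw [e1] at this
        rw [e2]
        simp only [List.take_succ_cons, List.sum_cons] at this ⊢
        omega

lemma cycle_count : ∀ n k : ℕ, ∀ d : List ℕ, 1 ≤ k → d.length = n → d.sum + k = n →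
    cnt k d = k := by
  intro n
  induction n using Nat.strong_induction_on with
  | _ n ihn =>
  intro k d hk hlen hsum
  rcases Nat.eq_zero_or_pos d.sum with hs0 | hs1
  · have hnk : n = k := by omega
    unfold cnt
    rw [hlen]
    have hall : ∀ r ∈ Finset.range n, Valid k (d.rotate r) := by
      intro r _ j hj
      rw [List.length_rotate, hlen] at hj
      omega
    rw [Finset.filter_true_of_mem hall, Finset.card_range]
    omega
  · have hnk : k < n := by omega
    have h0 : 0 ∈ d := by
      by_contra h0
      have hpos : ∀ x ∈ d, 1 ≤ x := fun x hx => Nat.one_le_iff_ne_zero.2 (fun e => h0 (e ▸ hx))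
      have := length_le_sum d hpos
      omega
    have h1 : ∃ x ∈ d, x ≠ 0 := by
      by_contra h1
      push_neg at h1
      have : d.sum = 0 := List.sum_eq_zero_iff.2 h1
      omega
    obtain ⟨s, e, a, hrot⟩ := exists_pair d h0 h1
    set m := e.length with hm
    have hwlen : m + 2 = n := by
      have := congrArg List.length hrot
      simpa [List.length_rotate, hlen] using this.symm
    have hwsum : e.sum + (a + 1) = d.sum := by
      have := ((List.rotate_perm d s).sum_eq)
      rw [hrot] at this
      simpa using this
    have h2 : cnt k d = cnt k (e ++ [a + 1, 0]) := by rw [← hrot, cnt_rotate]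
    have hIH : cnt k (e ++ [a]) = k :=
      ihn (n - 1) (by omega) k (e ++ [a]) hk (by simp; omega) (by simp; omega)
    rw [h2]
    have hl1 : (e ++ [a + 1, 0]).length = m + 2 := by simp [hm]
    have hl2 : (e ++ [a]).length = m + 1 := by simp [hm]
    have hnotP : ¬ Valid k ((e ++ [a + 1, 0]).rotate (m + 1)) := by
      intro hv
      have hrr : (e ++ [a + 1, 0]).rotate (m + 1) = 0 :: (e ++ [a + 1]) := by
        have hsplit : e ++ [a + 1, 0] = (e ++ [a + 1]) ++ [0] := by simp
        have hlen1 : m + 1 = (e ++ [a + 1]).length := by simp [hm]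
        rw [hsplit, hlen1, rotate_append]
        rfl
      have := hv (m + 1) (by rw [hrr]; simp [hm])
      rw [hrr, List.take_succ_cons, List.sum_cons] at this
      have htk : List.take m (e ++ [a + 1]) = e := by
        rw [hm, List.take_left]
      rw [htk] at this
      omega
    have hkey : cnt k (e ++ [a + 1, 0]) = cnt k (e ++ [a]) := by
      unfold cnt
      rw [hl1, hl2]
      conv_lhs => rw [Finset.range_add_one, Finset.filter_insert, if_neg hnotP]
      congr 1
      refine Finset.filter_congr ?_
      intro r hr
      rw [Finset.mem_range] at hr
      have hrm : r ≤ m := by omega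
      have hwr : (e ++ [a + 1, 0]).rotate r = e.drop r ++ (a + 1) :: 0 :: e.take r := by
        rw [List.rotate_eq_drop_append_take (by simp; omega),
          List.drop_append_of_le_length hrm, List.take_append_of_le_length hrm]
        simp
      have hyr : (e ++ [a]).rotate r = e.drop r ++ a :: e.take r := by
        rw [List.rotate_eq_drop_append_take (by simp; omega),
          List.drop_append_of_le_length hrm, List.take_append_of_le_length hrm]
        simp
      rw [hwr, hyr]
      exact valid_merge k a (e.drop r) (e.take r)
    rw [hkey, hIH]

noncomputable def W (p : PMF ℕ) (d : List ℕ) : ℝ≥0∞ := (d.map fun x => p x).prod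

lemma W_rotate (p : PMF ℕ) (l : List ℕ) (r : ℕ) : W p (l.rotate r) = W p l :=
  List.Perm.prod_eq ((List.rotate_perm l r).map _)

lemma sum_rotate (l : List ℕ) (r : ℕ) : (l.rotate r).sum = l.sum :=
  (List.rotate_perm l r).sum_eq

lemma forestDegList_eq {k n : ℕ} (f : PForest k n) :
    forestDegList f = ((List.ofFn f.1).map PTree.degList).flatten := by
  unfold forestDegList
  rw [List.map_ofFn]
  rfl

lemma forestDegList_length {k n : ℕ} (f : PForest k n) : (forestDegList f).length = n := by
  rw [forestDegList_eq, List.length_flatten, List.map_map]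
  have h1 : (List.length ∘ PTree.degList) = PTree.size := funext fun t => degList_length t
  rw [h1, List.map_ofFn, List.sum_ofFn]
  exact f.2

lemma forestDegList_code {k n : ℕ} (f : PForest k n) : IsCode k (forestDegList f) := by
  rw [forestDegList_eq]
  have := isCode_flatten (List.ofFn f.1) (fun t _ => isCode_degList t)
  simpa using this

lemma forestWt_eq {k n : ℕ} (p : PMF ℕ) (f : PForest k n) :
    forestWt p f = W p (forestDegList f) := by
  unfold forestWt W
  rw [forestDegList_eq, List.map_flatten, List.prod_flatten, List.map_map, List.map_map,
    List.map_ofFn, List.prod_ofFn]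
  refine Finset.prod_congr rfl fun i _ => ?_
  rw [wt_eq_prod p (f.1 i)]
  rfl

noncomputable def forestEquiv (k n : ℕ) :
    PForest k n ≃ {d : List ℕ // d.length = n ∧ IsCode k d} := by
  refine Equiv.ofBijective
    (fun f => ⟨forestDegList f, forestDegList_length f, forestDegList_code f⟩) ⟨?_, ?_⟩
  · intro f1 f2 hf
    simp only [Subtype.mk.injEq] at hf
    rw [forestDegList_eq, forestDegList_eq] at hf
    have h2 := degList_flatten_inj _ _ (by simp) hf
    exact Subtype.ext (List.ofFn_inj.1 h2)
  · rintro ⟨d, hdl, hdc⟩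
    obtain ⟨L, hL, hflat⟩ := exists_forest d.length d k rfl hdc
    subst hL
    have msum : (L.map PTree.size).sum = n := by
      have h3 : d.length = (L.map PTree.size).sum := by
        rw [← hflat, List.length_flatten, List.map_map]
        congr 1
        exact List.map_congr_left fun t _ => degList_length t
      omega
    refine ⟨⟨fun i => L.get i, ?_⟩, ?_⟩
    · have h4 : List.ofFn (fun i => (L.get i).size) = L.map PTree.size := by
        rw [show (fun i => (L.get i).size) = (PTree.size ∘ L.get) from rfl, ← List.map_ofFn,
          List.ofFn_get]
      show ∑ i : Fin L.length, (L.get i).size = n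
      rw [← List.sum_ofFn (f := fun i => (L.get i).size), h4]
      exact msum
    · refine Subtype.ext ?_
      show forestDegList _ = d
      refine (forestDegList_eq _).trans ?_
      show ((List.ofFn fun i => L.get i).map PTree.degList).flatten = d
      rw [show (fun i => L.get i) = L.get from rfl, List.ofFn_get, hflat]

noncomputable def tupleEquiv (n k : ℕ) :
    {x : Fin n → ℕ // ∑ i, x i = n - k} ≃ {d : List ℕ // d.length = n ∧ d.sum = n - k} := by
  refine Equiv.ofBijective
    (fun x => ⟨List.ofFn x.1, by simp, by rw [List.sum_ofFn]; exact x.2⟩) ⟨?_, ?_⟩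
  · intro x y h
    simp only [Subtype.mk.injEq] at h
    exact Subtype.ext (List.ofFn_inj.1 h)
  · rintro ⟨d, hdl, hds⟩
    subst hdl
    exact ⟨⟨d.get, by rw [← List.sum_ofFn, List.ofFn_get]; exact hds⟩,
      Subtype.ext (List.ofFn_get d)⟩

lemma rotate_eq_self (l : List ℕ) (t : ℕ) (h : t % l.length = 0) : l.rotate t = l := by
  rw [← List.rotate_mod, h, List.rotate_zero]

def rotEquivRaw (r : ℕ) : List ℕ ≃ List ℕ where
  toFun l := l.rotate r
  invFun l := l.rotate (l.length - r % l.length)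
  left_inv l := by
    show (l.rotate r).rotate ((l.rotate r).length - r % (l.rotate r).length) = l
    rw [List.length_rotate]
    rcases Nat.eq_zero_or_pos l.length with h0 | hpos
    · rw [List.length_eq_zero_iff] at h0; subst h0; simp
    rw [List.rotate_rotate]
    refine rotate_eq_self _ _ ?_
    have h1 := Nat.mod_add_div r l.length
    have h2 : r % l.length < l.length := Nat.mod_lt _ hpos
    have h3 : r + (l.length - r % l.length) = l.length * (r / l.length + 1) := by
      rw [Nat.mul_add, Nat.mul_one]
      omega
    rw [h3, Nat.mul_mod_right]
  right_inv l := by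
    show (l.rotate (l.length - r % l.length)).rotate r = l
    rcases Nat.eq_zero_or_pos l.length with h0 | hpos
    · rw [List.length_eq_zero_iff] at h0; subst h0; simp
    rw [List.rotate_rotate]
    refine rotate_eq_self _ _ ?_
    have h1 := Nat.mod_add_div r l.length
    have h2 : r % l.length < l.length := Nat.mod_lt _ hpos
    have h3 : l.length - r % l.length + r = l.length * (r / l.length + 1) := by
      rw [Nat.mul_add, Nat.mul_one]
      omega
    rw [h3, Nat.mul_mod_right]

lemma tsum_subtype_ite (P : List ℕ → Prop) [DecidablePred P] (f : List ℕ → ℝ≥0∞) :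
    ∑' c : {d : List ℕ // P d}, f c.1 = ∑' d : List ℕ, if P d then f d else 0 := by
  classical
  rw [show (∑' c : {d : List ℕ // P d}, f c.1)
      = ∑' x : ({d | P d} : Set (List ℕ)), f x.1 from rfl, tsum_subtype]
  exact tsum_congr fun d => by simp [Set.indicator_apply, Set.mem_setOf_eq]

lemma cycle_mul (p : PMF ℕ) {k n : ℕ} (hk : 1 ≤ k) (hkn : k ≤ n) (d : List ℕ)
    (hlen : d.length = n) (hsum : d.sum = n - k) :
    (k : ℝ≥0∞) * W p d = ∑ r ∈ Finset.range n, if Valid k (d.rotate r) then W p d else 0 := by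
  rw [← Finset.sum_filter, Finset.sum_const, nsmul_eq_mul]
  congr 1
  have h1 : ((Finset.range n).filter fun r => Valid k (d.rotate r)).card = k := by
    have h2 := cycle_count n k d hk hlen (by omega)
    unfold cnt at h2
    rwa [hlen] at h2
  rw [h1]


end GWAux

open GWAux in
/-- For a Galton–Watson process with offspring law `p` started from `k`
ancestors, the probability that the total progeny equals `n` (for `1 ≤ k ≤ n`) equals
`(k / n) · P(X 1 + ... + X n = n - k)` where the `X i` are i.i.d. with law `p`. -/
theorem gw_total_progeny_eq
    (p : PMF ℕ) (k n : ℕ) (hk : 1 ≤ k) (hkn : k ≤ n) :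
    (∑' f : PForest k n, forestWt p f)
      = ((k : ℝ≥0∞) / (n : ℝ≥0∞)) *
        ∑' x : {x : Fin n → ℕ // ∑ i, x i = n - k}, ∏ i, p (x.1 i) := by
  classical
  have hn : 0 < n := lt_of_lt_of_le hk hkn
  have hL : (∑' f : PForest k n, forestWt p f)
      = ∑' d : List ℕ, if d.length = n ∧ IsCode k d then W p d else 0 := by
    calc (∑' f : PForest k n, forestWt p f)
        = ∑' f : PForest k n, W p ((forestEquiv k n f).1) :=
          tsum_congr (fun f => forestWt_eq p f)
      _ = ∑' c : {d : List ℕ // d.length = n ∧ IsCode k d}, W p c.1 :=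
          Equiv.tsum_eq (forestEquiv k n) (fun c => W p c.1)
      _ = ∑' d : List ℕ, if d.length = n ∧ IsCode k d then W p d else 0 :=
          tsum_subtype_ite _ _
  have hR : (∑' x : {x : Fin n → ℕ // ∑ i, x i = n - k}, ∏ i, p (x.1 i))
      = ∑' d : List ℕ, if d.length = n ∧ d.sum = n - k then W p d else 0 := by
    calc (∑' x : {x : Fin n → ℕ // ∑ i, x i = n - k}, ∏ i, p (x.1 i))
        = ∑' x : {x : Fin n → ℕ // ∑ i, x i = n - k}, W p ((tupleEquiv n k x).1) := by
          refine tsum_congr fun x => ?_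
          show (∏ i, p (x.1 i)) = W p (List.ofFn x.1)
          unfold W
          rw [List.map_ofFn, List.prod_ofFn]
          rfl
      _ = ∑' c : {d : List ℕ // d.length = n ∧ d.sum = n - k}, W p c.1 :=
          Equiv.tsum_eq (tupleEquiv n k) (fun c => W p c.1)
      _ = ∑' d : List ℕ, if d.length = n ∧ d.sum = n - k then W p d else 0 :=
          tsum_subtype_ite _ _
  have key : (n : ℝ≥0∞) * (∑' d : List ℕ, if d.length = n ∧ IsCode k d then W p d else 0)
      = (k : ℝ≥0∞) * (∑' d : List ℕ, if d.length = n ∧ d.sum = n - k then W p d else 0) := by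
    symm
    calc (k : ℝ≥0∞) * (∑' d : List ℕ, if d.length = n ∧ d.sum = n - k then W p d else 0)
        = ∑' d : List ℕ, (k : ℝ≥0∞) * (if d.length = n ∧ d.sum = n - k then W p d else 0) :=
          (ENNReal.tsum_mul_left).symm
      _ = ∑' d : List ℕ, ∑ r ∈ Finset.range n,
            (if (d.length = n ∧ d.sum = n - k) ∧ Valid k (d.rotate r) then W p d else 0) := by
          refine tsum_congr fun d => ?_
          by_cases hd : d.length = n ∧ d.sum = n - k
          · rw [if_pos hd, cycle_mul p hk hkn d hd.1 hd.2]
            refine Finset.sum_congr rfl fun r _ => ?_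
            by_cases hv : Valid k (d.rotate r)
            · rw [if_pos hv, if_pos ⟨hd, hv⟩]
            · rw [if_neg hv, if_neg (fun h => hv h.2)]
          · rw [if_neg hd, mul_zero]
            symm
            refine Finset.sum_eq_zero fun r _ => ?_
            rw [if_neg (fun h => hd h.1)]
      _ = ∑ r ∈ Finset.range n, ∑' d : List ℕ,
            (if (d.length = n ∧ d.sum = n - k) ∧ Valid k (d.rotate r) then W p d else 0) :=
          Summable.tsum_finsetSum (fun _ _ => ENNReal.summable)
      _ = ∑ r ∈ Finset.range n, ∑' d : List ℕ,
            (if (d.length = n ∧ d.sum = n - k) ∧ Valid k d then W p d else 0) := by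
          refine Finset.sum_congr rfl fun r _ => ?_
          rw [← Equiv.tsum_eq (rotEquivRaw r)
            (fun d => if (d.length = n ∧ d.sum = n - k) ∧ Valid k d then W p d else 0)]
          refine tsum_congr fun d => ?_
          show (if (d.length = n ∧ d.sum = n - k) ∧ Valid k (d.rotate r) then W p d else 0)
              = (if ((d.rotate r).length = n ∧ (d.rotate r).sum = n - k) ∧ Valid k (d.rotate r)
                  then W p (d.rotate r) else 0)
          rw [List.length_rotate, sum_rotate, W_rotate]
      _ = (n : ℝ≥0∞) * ∑' d : List ℕ,
            (if (d.length = n ∧ d.sum = n - k) ∧ Valid k d then W p d else 0) := by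
          rw [Finset.sum_const, Finset.card_range, nsmul_eq_mul]
      _ = (n : ℝ≥0∞) * (∑' d : List ℕ, if d.length = n ∧ IsCode k d then W p d else 0) := by
          congr 1
          refine tsum_congr fun d => ?_
          refine if_congr ?_ rfl rfl
          unfold IsCode
          constructor
          · rintro ⟨⟨h1, h2⟩, h3⟩
            exact ⟨h1, h3, by omega⟩
          · rintro ⟨h1, h3, h2⟩
            exact ⟨⟨h1, by omega⟩, h3⟩
  rw [hL, hR]
  have hn0 : ((n : ℕ) : ℝ≥0∞) ≠ 0 := Nat.cast_ne_zero.2 (by omega)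
  have hnt : ((n : ℕ) : ℝ≥0∞) ≠ ⊤ := ENNReal.natCast_ne_top n
  calc (∑' d : List ℕ, if d.length = n ∧ IsCode k d then W p d else 0)
      = ((n : ℝ≥0∞)⁻¹ * n) * (∑' d : List ℕ, if d.length = n ∧ IsCode k d then W p d else 0) := by
        rw [ENNReal.inv_mul_cancel hn0 hnt, one_mul]
    _ = (n : ℝ≥0∞)⁻¹ * ((n : ℝ≥0∞) * ∑' d : List ℕ, if d.length = n ∧ IsCode k d then W p d else 0) := by
        rw [mul_assoc]
    _ = (n : ℝ≥0∞)⁻¹ * ((k : ℝ≥0∞) * ∑' d : List ℕ, if d.length = n ∧ d.sum = n - k then W p d else 0) := by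
        rw [key]
    _ = ((k : ℝ≥0∞) / (n : ℝ≥0∞)) * ∑' d : List ℕ, if d.length = n ∧ d.sum = n - k then W p d else 0 := by
        rw [div_eq_mul_inv]
        ring
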